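/- Let G₁ be a finite group whose order is not divisible by 3, let G₂ be a group, and let f : G₁ → G₂ be a map satisfying f(a²ba⁻¹) = f(a)²·f(b)·f(a)⁻¹ for all a,b ∈ G₁. Then f is a group homomorphism: f(xy) = f(x)·f(y) for all x,y ∈ G₁. -/
import Mathlib


/-- If `G₁` is a finite group with `3 ∤ |G₁|` and `f : G₁ → G₂` preserves the
gyrogroup operation `a ⊙ b = a² b a⁻¹`, then `f` is a group homomorphism. -/
theorem gyro_hom_is_group_hom (G₁ G₂ : Type*) [Group G₁] [Group G₂] [Finite G₁]
    (h₃ : ¬ (3 ∣ Nat.card G₁)) (f : G₁ → G₂)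
    (hf : ∀ a b : G₁, f (a ^ 2 * b * a⁻¹) = (f a) ^ 2 * f b * (f a)⁻¹) :
    ∀ x y : G₁, f (x * y) = f x * f y := by
  -- Step 1 : f 1 = 1
  have h1 : f 1 = 1 := by
    have h := hf 1 1
    rw [show (1 : G₁) ^ 2 * 1 * (1 : G₁)⁻¹ = 1 by group] at h
    have h' : f 1 * 1 = f 1 * f 1 := by
      rw [mul_one]
      calc f 1 = f 1 ^ 2 * f 1 * (f 1)⁻¹ := h
        _ = f 1 * f 1 := by rw [mul_inv_cancel_right, pow_two]
    exact (mul_left_cancel h').symm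
  -- Step 2 : f (x⁻¹) = (f x)⁻¹
  have hinv : ∀ x : G₁, f x⁻¹ = (f x)⁻¹ := by
    intro x
    have h := hf x x⁻¹
    rw [show x ^ 2 * x⁻¹ * x⁻¹ = 1 by group, h1] at h
    calc f x⁻¹ = ((f x) ^ 2)⁻¹ * ((f x) ^ 2 * f x⁻¹ * (f x)⁻¹) * f x := by group
      _ = (f x)⁻¹ := by rw [← h]; group
  -- Step 3 : f (g²) = (f g)², f (g³) = (f g)³
  have hsq : ∀ g : G₁, f (g ^ 2) = (f g) ^ 2 := by
    intro g
    have h := hf g g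
    rw [show g ^ 2 * g * g⁻¹ = g ^ 2 by group] at h
    rw [h]; group
  have hcube : ∀ g : G₁, f (g ^ 3) = (f g) ^ 3 := by
    intro g
    have h := hf g (g ^ 2)
    rw [show g ^ 2 * g ^ 2 * g⁻¹ = g ^ 3 by group] at h
    rw [h, hsq g]; group
  -- Step 4 : the master identity  f (g² * w) = (f g)² * f (w * g) * (f g)⁻¹
  have hIIc : ∀ g w : G₁, f (g ^ 2 * w) = (f g) ^ 2 * f (w * g) * (f g)⁻¹ := by
    intro g w
    have h := hf g (w * g)
    rw [show g ^ 2 * (w * g) * g⁻¹ = g ^ 2 * w by group] at h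
    exact h
  -- Step 5 : the mirrored identity  f (w * g²) = (f g)⁻¹ * f (g * w) * (f g)²
  have hIId : ∀ g w : G₁, f (w * g ^ 2) = (f g)⁻¹ * f (g * w) * (f g) ^ 2 := by
    intro g w
    have h := hIIc g⁻¹ w⁻¹
    rw [show w⁻¹ * g⁻¹ = (g * w)⁻¹ by group, hinv (g * w), hinv g] at h
    have e2 : f (w * g ^ 2) = (f (g⁻¹ ^ 2 * w⁻¹))⁻¹ := by
      rw [show g⁻¹ ^ 2 * w⁻¹ = (w * g ^ 2)⁻¹ by group, hinv, inv_inv]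
    rw [e2, h]; group
  -- Step 6 : f (w * g³) = (f g)⁻³ * f (g³ * w) * (f g)³
  have hXII : ∀ g w : G₁, f (w * g ^ 3) = ((f g) ^ 3)⁻¹ * f (g ^ 3 * w) * (f g) ^ 3 := by
    intro g w
    have hA := hIIc g (w * g ^ 2)
    rw [show (w * g ^ 2) * g = w * g ^ 3 by group] at hA
    have hB := hIId g (g ^ 2 * w)
    rw [show g * (g ^ 2 * w) = g ^ 3 * w by group] at hB
    have e : g ^ 2 * (w * g ^ 2) = (g ^ 2 * w) * g ^ 2 := by group
    rw [e, hB] at hA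
    -- hA : (f g)⁻¹ * f (g³ * w) * (f g)² = (f g)² * f (w * g³) * (f g)⁻¹
    calc f (w * g ^ 3)
        = ((f g) ^ 2)⁻¹ * ((f g) ^ 2 * f (w * g ^ 3) * (f g)⁻¹) * f g := by group
      _ = ((f g) ^ 2)⁻¹ * ((f g)⁻¹ * f (g ^ 3 * w) * (f g) ^ 2) * f g := by rw [← hA]
      _ = ((f g) ^ 3)⁻¹ * f (g ^ 3 * w) * (f g) ^ 3 := by group
  -- Step 7 : cubing is surjective since 3 ∤ |G₁|
  have hcop : (Nat.card G₁).Coprime 3 :=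
    ((Nat.prime_three.coprime_iff_not_dvd).mpr h₃).symm
  have hsurj : ∀ u : G₁, ∃ g : G₁, g ^ 3 = u := by
    intro u
    exact ⟨(powCoprime hcop).symm u, (powCoprime hcop).apply_symm_apply u⟩
  -- Step 8 : twisted commutativity  f (u * w) = f u * f (w * u) * (f u)⁻¹
  have hstar : ∀ u w : G₁, f (u * w) = f u * f (w * u) * (f u)⁻¹ := by
    intro u w
    obtain ⟨g, hg⟩ := hsurj u
    have h := hXII g w
    rw [hg, ← hcube g, hg] at h
    rw [h]; group
  -- Step 9 : conclusion
  intro x y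
  have h := hIIc x (x⁻¹ * y)
  rw [show x ^ 2 * (x⁻¹ * y) = x * y by group] at h
  have h2 := hstar x (x⁻¹ * y)
  rw [show x * (x⁻¹ * y) = y by group] at h2
  -- h2 : f y = f x * f ((x⁻¹ * y) * x) * (f x)⁻¹
  have h3 : f ((x⁻¹ * y) * x) = (f x)⁻¹ * f y * f x := by rw [h2]; group
  rw [h, h3]; group
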